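/- For every m ≥ 0, the three integers λ_0^(m,a), λ_1^(m,a), λ_2^(m,a) are pairwise coprime. -/

import Mathlib

def vseq (B : ℤ) : ℕ → ℤ
  | 0 => 1
  | 1 => 1
  | (m+2) => (B+2) * vseq B (m+1) - vseq B m

lemma vseq_pos (B : ℤ) (hB : 0 ≤ B) : ∀ m, 1 ≤ vseq B m ∧ vseq B m ≤ vseq B (m+1) := by
  intro m
  induction m with
  | zero => simp [vseq]
  | succ m ih =>
    obtain ⟨h1, h2⟩ := ih
    constructor
    · linarith
    · show vseq B (m+1) ≤ (B+2) * vseq B (m+1) - vseq B m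
      nlinarith

lemma vseq_id (B : ℤ) : ∀ m, vseq B (m+2) * vseq B m = vseq B (m+1)^2 + B := by
  intro m
  induction m with
  | zero => show ((B+2)*1 - 1) * 1 = 1^2 + B; ring
  | succ m ih =>
    show ((B+2) * vseq B (m+2) - vseq B (m+1)) * vseq B (m+1) = vseq B (m+2)^2 + B
    have this : vseq B (m+2) = (B+2) * vseq B (m+1) - vseq B m := rfl
    linear_combination ih - vseq B (m+2) * this

lemma vseq_coprime (B : ℤ) : ∀ m, IsCoprime (vseq B m) (vseq B (m+1)) := by
  intro m
  induction m with
  | zero => exact isCoprime_one_left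
  | succ m ih =>
    have h : IsCoprime (vseq B (m+1)) (-(vseq B m) + vseq B (m+1) * (B+2)) :=
      (ih.symm.neg_right).add_mul_left_right (B+2)
    have e : -(vseq B m) + vseq B (m+1) * (B+2) = vseq B (m+2) := by
      show _ = (B+2) * vseq B (m+1) - vseq B m; ring
    rwa [e] at h

lemma vseq_mod (B : ℤ) : ∀ m, B ∣ vseq B m - 1 ∧ B ∣ vseq B (m+1) - 1 := by
  intro m
  induction m with
  | zero => simp [vseq]
  | succ m ih =>
    obtain ⟨h1, h2⟩ := ih
    refine ⟨h2, ?_⟩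
    have : vseq B (m+2) - 1 = B * vseq B (m+1) + 2*(vseq B (m+1) - 1) - (vseq B m - 1) := by
      show (B+2) * vseq B (m+1) - vseq B m - 1 = _; ring
    rw [this]
    exact dvd_sub (dvd_add (Dvd.intro _ rfl) (Dvd.dvd.mul_left h2 2)) h1

lemma vseq_coprime_B (B : ℤ) (m : ℕ) : IsCoprime B (vseq B m) := by
  obtain ⟨c, hc⟩ := (vseq_mod B m).1
  have : vseq B m = 1 + B * c := by linarith
  rw [this]
  exact isCoprime_one_right.add_mul_left_right c

theorem lambda_first_three_pairwise_coprime
    (n a : ℕ) (hn : 4 ≤ n) (ha : a ≤ n - 2)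
    (y : ℕ → ℕ)
    (hy0 : y 0 = 2)
    (hy : ∀ m, 1 ≤ m → y m = 1 + ∏ i ∈ Finset.range m, y i)
    (k : ℕ → ℕ)
    (hk : Set.BijOn k (Set.Icc 3 n) (Set.Iic (n - 2) \ {a}))
    (L : ℕ → ℕ → ℚ)
    (hL00 : L 0 0 = 1)
    (hL01 : L 0 1 = 2 * ((y (n - 1) : ℚ) - 1) / (y a : ℚ))
    (hL02 : L 0 2 = 1)
    (hL0i : ∀ i, 3 ≤ i → i ≤ n → L 0 i = 2 * ((y (n - 1) : ℚ) - 1) / (y (k i) : ℚ))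
    (hR0 : ∀ m, L (m + 1) 0 = L m 2)
    (hR1 : ∀ m, L (m + 1) 1 = L m 1)
    (hR2 : ∀ m, L (m + 1) 2 = (L m 1 + L m 2) ^ 2 / L m 0)
    (hRi : ∀ m i, 3 ≤ i → i ≤ n → L (m + 1) i = L m i * (L m 1 + L m 2) / L m 0)
    : ∀ m, ∃ z : Fin 3 → ℤ, (∀ i : Fin 3, L m (i : ℕ) = (z i : ℚ)) ∧
      (∀ i j : Fin 3, i ≠ j → IsCoprime (z i) (z j)) := by
  -- y is everywhere positive
  have hy1 : ∀ m, 1 ≤ y m := by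
    intro m
    rcases Nat.eq_zero_or_pos m with h | h
    · simp [h, hy0]
    · rw [hy m h]; omega
  -- a < n - 1
  have han : a ∈ Finset.range (n - 1) := by
    simp only [Finset.mem_range]; omega
  set Bn : ℕ := 2 * ∏ i ∈ (Finset.range (n - 1)).erase a, y i with hBn
  set B : ℤ := (Bn : ℤ) with hBdef
  have hB0 : (0 : ℤ) ≤ B := Int.ofNat_nonneg _
  -- y a * Bn = 2 * (y (n-1) - 1), in ℚ form
  have hprod : (y a : ℚ) * (Bn : ℚ) = 2 * ((y (n - 1) : ℚ) - 1) := by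
    have h1 : y (n - 1) = 1 + ∏ i ∈ Finset.range (n - 1), y i := hy (n - 1) (by omega)
    have h2 : y a * ∏ i ∈ (Finset.range (n - 1)).erase a, y i
        = ∏ i ∈ Finset.range (n - 1), y i := Finset.mul_prod_erase _ _ han
    have : (y (n - 1) : ℚ) = 1 + ((∏ i ∈ Finset.range (n - 1), y i : ℕ) : ℚ) := by
      rw [h1]; push_cast; ring
    rw [this, ← h2, hBn]
    push_cast
    ring
  have hya : (y a : ℚ) ≠ 0 := by
    have := hy1 a; positivity
  have hL01' : L 0 1 = (B : ℚ) := by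
    rw [hL01, hBdef]
    push_cast
    rw [← hprod]
    field_simp
  -- main invariant
  have key : ∀ m, L m 0 = ((vseq B m : ℚ))^2 ∧ L m 1 = (B : ℚ)
      ∧ L m 2 = ((vseq B (m+1) : ℚ))^2 := by
    intro m
    induction m with
    | zero =>
      refine ⟨?_, hL01', ?_⟩
      · rw [hL00]; norm_num [vseq]
      · rw [hL02]; norm_num [vseq]
    | succ m ih =>
      obtain ⟨h0, h1, h2⟩ := ih
      have hvne : ((vseq B m : ℚ)) ≠ 0 := by
        have := (vseq_pos B hB0 m).1
        intro hc
        rw [show ((vseq B m : ℚ)) = ((vseq B m : ℤ) : ℚ) from rfl] at hc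
        exact_mod_cast absurd (Int.cast_eq_zero.mp hc) (by omega)
      refine ⟨by rw [hR0, h2], by rw [hR1, h1], ?_⟩
      rw [hR2, h0, h1, h2]
      have hid : ((vseq B (m+2) : ℚ)) * (vseq B m : ℚ)
          = ((vseq B (m+1) : ℚ))^2 + (B : ℚ) := by
        exact_mod_cast congrArg (fun z : ℤ => (z : ℚ)) (vseq_id B m)
      rw [show ((B : ℚ) + ((vseq B (m+1) : ℚ))^2)
          = ((vseq B (m+2) : ℚ)) * (vseq B m : ℚ) by rw [hid]; ring]
      field_simp
  intro m
  refine ⟨![vseq B m ^ 2, B, vseq B (m+1) ^ 2], ?_, ?_⟩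
  · intro i
    obtain ⟨k0, k1, k2⟩ := key m
    fin_cases i
    · simpa using k0
    · simpa using k1
    · simpa using k2
  · have c01 : IsCoprime (vseq B m ^ 2) B := ((vseq_coprime_B B m).symm).pow_left
    have c02 : IsCoprime (vseq B m ^ 2) (vseq B (m+1) ^ 2) := (vseq_coprime B m).pow
    have c12 : IsCoprime B (vseq B (m+1) ^ 2) := (vseq_coprime_B B (m+1)).pow_right
    intro i j hij
    fin_cases i <;> fin_cases j <;>
      first
        | exact (hij rfl).elim
        | exact c01
        | exact c02
        | exact c12
        | exact c01.symm
        | exact c02.symm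
        | exact c12.symm
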